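/- Let (ωₙ) be a sequence of nonnegative reals such that the heat kernel K(t) = Σₙ e^(−ωₙ² t) converges for every t > 0. Then for every Ω > 0, Σₙ ωₙ erfc(ωₙ/Ω) = (Ω/√π) K(Ω^{−2}) − (1/√(4π)) ∫_{Ω^{−2}}^∞ t^(−3/2) K(t) dt, and in particular the left-hand sum converges. -/

import Mathlib

open MeasureTheory Real Set

noncomputable def E (x : ℝ) : ℝ := ∫ u in Set.Ioi x, Real.exp (-u ^ 2)

lemma gauss_integrable : MeasureTheory.Integrable (fun u : ℝ => Real.exp (-u ^ 2)) := by
  simpa using integrable_exp_neg_mul_sq (one_pos)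

lemma E_hasDerivAt (x : ℝ) : HasDerivAt E (-(Real.exp (-x ^ 2))) x := by
  have hg := gauss_integrable
  have key : ∀ y : ℝ, E y = ((∫ u, Real.exp (-u ^ 2)) - ∫ u in Set.Iic 0, Real.exp (-u ^ 2))
      - ∫ u in (0:ℝ)..y, Real.exp (-u ^ 2) := by
    intro y
    have h1 : (∫ u in Set.Iic y, Real.exp (-u ^ 2)) + ∫ u in Set.Ioi y, Real.exp (-u ^ 2)
        = ∫ u, Real.exp (-u ^ 2) := intervalIntegral.integral_Iic_add_Ioi hg.integrableOn hg.integrableOn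
    have h2 : (∫ u in Set.Iic y, Real.exp (-u ^ 2)) - ∫ u in Set.Iic 0, Real.exp (-u ^ 2)
        = ∫ u in (0:ℝ)..y, Real.exp (-u ^ 2) :=
      intervalIntegral.integral_Iic_sub_Iic hg.integrableOn hg.integrableOn
    unfold E; linarith
  have hF : HasDerivAt (fun y => ∫ u in (0:ℝ)..y, Real.exp (-u ^ 2)) (Real.exp (-x ^ 2)) x := by
    refine intervalIntegral.integral_hasDerivAt_right hg.intervalIntegrable
      hg.aestronglyMeasurable.stronglyMeasurableAtFilter ?_
    exact (Real.continuous_exp.comp (by continuity)).continuousAt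
  have := hF.const_sub ((∫ u, Real.exp (-u ^ 2)) - ∫ u in Set.Iic 0, Real.exp (-u ^ 2))
  exact this.congr_of_eventuallyEq (Filter.Eventually.of_forall fun y => (key y))

lemma E_nonneg (x : ℝ) : 0 ≤ E x :=
  MeasureTheory.integral_nonneg fun u => (Real.exp_pos _).le

lemma E_tendsto : Filter.Tendsto E Filter.atTop (nhds 0) := by
  apply tendsto_of_tendsto_of_tendsto_of_le_of_le' tendsto_const_nhds
    Real.tendsto_exp_neg_atTop_nhds_zero
  · exact Filter.Eventually.of_forall fun x => E_nonneg x
  · filter_upwards [Filter.eventually_ge_atTop (1:ℝ)] with x hx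
    have hb : E x ≤ ∫ u in Set.Ioi x, Real.exp (-u) := by
      refine setIntegral_mono_on gauss_integrable.integrableOn
        ((exp_neg_integrableOn_Ioi x one_pos).congr_fun (by intro u _; simp) measurableSet_Ioi)
        measurableSet_Ioi ?_
      intro u hu
      have : 1 ≤ u := le_trans hx (le_of_lt hu)
      exact Real.exp_le_exp.2 (by nlinarith)
    rwa [integral_exp_neg_Ioi] at hb

lemma integrable_F (c : ℝ) {a : ℝ} (ha : 0 < a) :
    MeasureTheory.IntegrableOn (fun t : ℝ => t ^ (-(3/2) : ℝ) * Real.exp (-c ^ 2 * t))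
      (Set.Ioi a) := by
  have hbase : MeasureTheory.IntegrableOn (fun t : ℝ => t ^ (-(3/2) : ℝ)) (Set.Ioi a) :=
    integrableOn_Ioi_rpow_of_lt (by norm_num) ha
  refine hbase.mono' ?_ ?_
  · apply ContinuousOn.aestronglyMeasurable ?_ measurableSet_Ioi
    apply ContinuousOn.mul
    · intro t ht
      exact (Real.continuousAt_rpow_const t _ (Or.inl (ne_of_gt (lt_trans ha ht)))).continuousWithinAt
    · exact (Real.continuous_exp.comp (by continuity)).continuousOn
  · filter_upwards [MeasureTheory.ae_restrict_mem measurableSet_Ioi] with t ht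
    have ht0 : 0 < t := lt_trans ha ht
    have h1 : 0 ≤ t ^ (-(3/2) : ℝ) := Real.rpow_nonneg ht0.le _
    have h2 : Real.exp (-c ^ 2 * t) ≤ 1 := by
      rw [Real.exp_le_one_iff]; nlinarith [sq_nonneg c]
    rw [Real.norm_eq_abs, abs_of_nonneg (mul_nonneg h1 (Real.exp_pos _).le)]
    nlinarith [Real.exp_pos (-c ^ 2 * t)]

lemma key_integral (c : ℝ) (hc : 0 ≤ c) {a : ℝ} (ha : 0 < a) :
    ∫ t in Set.Ioi a, t ^ (-(3/2) : ℝ) * Real.exp (-c ^ 2 * t)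
      = 2 * a ^ (-(1/2) : ℝ) * Real.exp (-c ^ 2 * a) - 4 * c * E (c * Real.sqrt a) := by
  set f : ℝ → ℝ := fun t => -2 * t ^ (-(1/2) : ℝ) * Real.exp (-c ^ 2 * t)
      + 4 * c * E (c * Real.sqrt t) with hf
  have hderiv : ∀ t ∈ Set.Ici a, HasDerivAt f (t ^ (-(3/2) : ℝ) * Real.exp (-c ^ 2 * t)) t := by
    intro t ht
    have ht0 : 0 < t := lt_of_lt_of_le ha ht
    have hs0 : 0 < Real.sqrt t := Real.sqrt_pos.2 ht0
    have h1 : HasDerivAt (fun t : ℝ => t ^ (-(1/2) : ℝ)) (-(1/2) * t ^ (-(1/2) - 1 : ℝ)) t :=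
      Real.hasDerivAt_rpow_const (Or.inl (ne_of_gt ht0))
    have h2 : HasDerivAt (fun t : ℝ => Real.exp (-c ^ 2 * t))
        (Real.exp (-c ^ 2 * t) * (-c ^ 2)) t := by
      have hl : HasDerivAt (fun t : ℝ => -c ^ 2 * t) (-c ^ 2) t := by
        simpa using (hasDerivAt_id t).const_mul (-c ^ 2)
      exact (Real.hasDerivAt_exp (-c ^ 2 * t)).comp t hl
    have hsq : HasDerivAt (fun t : ℝ => c * Real.sqrt t) (c * (1 / (2 * Real.sqrt t))) t :=
      (Real.hasDerivAt_sqrt (ne_of_gt ht0)).const_mul c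
    have hE : HasDerivAt (fun t : ℝ => E (c * Real.sqrt t))
        (-(Real.exp (-(c * Real.sqrt t) ^ 2)) * (c * (1 / (2 * Real.sqrt t)))) t :=
      by have := (E_hasDerivAt (c * Real.sqrt t)).comp t hsq; exact this
    have hmain := (((h1.const_mul (-2 : ℝ)).mul h2).add (hE.const_mul (4 * c)))
    have hexp_eq : Real.exp (-(c * Real.sqrt t) ^ 2) = Real.exp (-c ^ 2 * t) := by
      rw [mul_pow, Real.sq_sqrt ht0.le]; ring_nf
    rw [hexp_eq] at hE hmain
    convert hmain using 1
    · rfl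
    · rfl
    · rfl
    have e1 : t ^ (-(1/2) - 1 : ℝ) = t ^ (-(3/2) : ℝ) := by norm_num
    have e2 : t ^ (-(1/2) : ℝ) = (Real.sqrt t)⁻¹ := by
      rw [Real.sqrt_eq_rpow, ← Real.rpow_neg ht0.le]
    have einv : t⁻¹ = t ^ (-1 : ℝ) := by
      rw [Real.rpow_neg ht0.le, Real.rpow_one]
    have e3 : t ^ (-(3/2) : ℝ) = (Real.sqrt t)⁻¹ * t⁻¹ := by
      rw [← e2, einv, ← Real.rpow_add ht0]
      norm_num
    rw [e1, e2, e3]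
    field_simp
    ring
  have hcont : Filter.Tendsto f Filter.atTop (nhds 0) := by
    have t1 : Filter.Tendsto (fun t : ℝ => -2 * t ^ (-(1/2) : ℝ) * Real.exp (-c ^ 2 * t))
        Filter.atTop (nhds 0) := by
      refine squeeze_zero_norm' (a := fun t : ℝ => 2 * t ^ (-(1/2) : ℝ)) ?_ ?_
      · filter_upwards [Filter.eventually_gt_atTop (0:ℝ)] with t ht
        have h1 : 0 ≤ t ^ (-(1/2) : ℝ) := Real.rpow_nonneg ht.le _
        have h2 : Real.exp (-c ^ 2 * t) ≤ 1 := by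
          rw [Real.exp_le_one_iff]; nlinarith [sq_nonneg c]
        rw [Real.norm_eq_abs, abs_of_nonpos (by nlinarith [Real.exp_pos (-c ^ 2 * t)])]
        nlinarith [Real.exp_pos (-c ^ 2 * t)]
      · simpa using (tendsto_rpow_neg_atTop (by norm_num : (0:ℝ) < 1/2)).const_mul (2:ℝ)

    have t2 : Filter.Tendsto (fun t : ℝ => 4 * c * E (c * Real.sqrt t))
        Filter.atTop (nhds 0) := by
      rcases eq_or_lt_of_le hc with h | h
      · rw [← h]
        simpa using tendsto_const_nhds (α := ℝ) (f := Filter.atTop) (a := (0:ℝ))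
      · have hsqrtTop : Filter.Tendsto Real.sqrt Filter.atTop Filter.atTop := by
          refine (tendsto_rpow_atTop (by norm_num : (0:ℝ) < 1/2)).congr' ?_
          filter_upwards [Filter.eventually_ge_atTop (0:ℝ)] with x hx
          rw [Real.sqrt_eq_rpow]
        have hcomp : Filter.Tendsto (fun t : ℝ => c * Real.sqrt t) Filter.atTop Filter.atTop :=
          hsqrtTop.const_mul_atTop h
        simpa using (E_tendsto.comp hcomp).const_mul (4 * c)
    have hadd := t1.add t2
    simp only [add_zero] at hadd
    exact hadd
  have := MeasureTheory.integral_Ioi_of_hasDerivAt_of_tendsto' hderiv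
    (integrable_F c ha) hcont
  rw [this, hf]
  ring


/-- The complementary error function `erfc x = (2/√π) ∫_x^∞ e^{-t²} dt`. -/
noncomputable def erfc (x : ℝ) : ℝ :=
  (2 / Real.sqrt π) * ∫ t in Set.Ioi x, Real.exp (-t ^ 2)

theorem erfc_regularized_sum_eq_heat_kernel_rep (ω : ℕ → ℝ) (hω : ∀ n, 0 ≤ ω n)
    (hK : ∀ t : ℝ, 0 < t → Summable fun n => Real.exp (-(ω n) ^ 2 * t))
    (Ω : ℝ) (hΩ : 0 < Ω) :
    HasSum (fun n => ω n * erfc (ω n / Ω))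
      ((Ω / Real.sqrt π) * (∑' n, Real.exp (-(ω n) ^ 2 * (Ω ^ 2)⁻¹))
        - (1 / Real.sqrt (4 * π)) *
            ∫ t in Set.Ioi ((Ω ^ 2)⁻¹),
              t ^ (-(3/2) : ℝ) * (∑' n, Real.exp (-(ω n) ^ 2 * t))) := by
  set a : ℝ := (Ω ^ 2)⁻¹ with ha_def
  have ha : 0 < a := by positivity
  have hsqrta : Real.sqrt a = Ω⁻¹ := by
    rw [ha_def, Real.sqrt_inv, Real.sqrt_sq hΩ.le]
  have harpow : a ^ (-(1/2) : ℝ) = Ω := by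
    rw [Real.rpow_neg ha.le, ← Real.sqrt_eq_rpow, hsqrta, inv_inv]
  have hsqrt4pi : Real.sqrt (4 * π) = 2 * Real.sqrt π := by
    rw [show (4:ℝ) = 2^2 by norm_num, Real.sqrt_mul (by positivity), Real.sqrt_sq (by norm_num)]
  have hπ : 0 < Real.sqrt π := Real.sqrt_pos.2 Real.pi_pos
  have hFint : ∀ n, MeasureTheory.IntegrableOn
      (fun t : ℝ => t ^ (-(3/2) : ℝ) * Real.exp (-(ω n) ^ 2 * t)) (Set.Ioi a) :=
    fun n => integrable_F (ω n) ha
  have hval : ∀ n, (∫ t in Set.Ioi a, t ^ (-(3/2) : ℝ) * Real.exp (-(ω n) ^ 2 * t))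
      = 2 * Ω * Real.exp (-(ω n) ^ 2 * a) - 4 * ω n * E (ω n * Ω⁻¹) := by
    intro n
    rw [key_integral (ω n) (hω n) ha, harpow, hsqrta]
  have hnorm : ∀ n, (∫ t in Set.Ioi a, ‖t ^ (-(3/2) : ℝ) * Real.exp (-(ω n) ^ 2 * t)‖)
      = ∫ t in Set.Ioi a, t ^ (-(3/2) : ℝ) * Real.exp (-(ω n) ^ 2 * t) := by
    intro n
    refine MeasureTheory.setIntegral_congr_fun measurableSet_Ioi fun t ht => ?_
    rw [Real.norm_eq_abs, abs_of_nonneg]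
    exact mul_nonneg (Real.rpow_nonneg (le_of_lt (lt_trans ha ht)) _) (Real.exp_pos _).le
  have hsumnorm : Summable fun n =>
      ∫ t in Set.Ioi a, ‖t ^ (-(3/2) : ℝ) * Real.exp (-(ω n) ^ 2 * t)‖ := by
    refine Summable.of_nonneg_of_le
      (fun n => MeasureTheory.integral_nonneg fun t => norm_nonneg _)
      (fun n => ?_) ((hK a ha).mul_left (2 * Ω))
    rw [hnorm n, hval n]
    have h1 : 0 ≤ 4 * ω n * E (ω n * Ω⁻¹) :=
      mul_nonneg (mul_nonneg (by norm_num) (hω n)) (E_nonneg _)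
    linarith
  have h2 : HasSum (fun n => ∫ t in Set.Ioi a, t ^ (-(3/2) : ℝ) * Real.exp (-(ω n) ^ 2 * t))
      (∫ t in Set.Ioi a, ∑' n, t ^ (-(3/2) : ℝ) * Real.exp (-(ω n) ^ 2 * t)) :=
    MeasureTheory.hasSum_integral_of_summable_integral_norm hFint hsumnorm
  have h1 : HasSum (fun n => Ω / Real.sqrt π * Real.exp (-(ω n) ^ 2 * a))
      (Ω / Real.sqrt π * ∑' n, Real.exp (-(ω n) ^ 2 * a)) :=
    (hK a ha).hasSum.mul_left _
  have hfinal := h1.sub (h2.mul_left (1 / Real.sqrt (4 * π)))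
  have hpt : (fun n => ω n * erfc (ω n / Ω))
      = fun n => Ω / Real.sqrt π * Real.exp (-(ω n) ^ 2 * a)
          - (1 / Real.sqrt (4 * π)) *
              ∫ t in Set.Ioi a, t ^ (-(3/2) : ℝ) * Real.exp (-(ω n) ^ 2 * t) := by
    funext n
    rw [hval n, hsqrt4pi]
    have herfc : erfc (ω n / Ω) = 2 / Real.sqrt π * E (ω n * Ω⁻¹) := by
      rw [erfc, div_eq_mul_inv (ω n) Ω]; rfl
    rw [herfc]
    field_simp
    ring
  have hint_eq : (∫ t in Set.Ioi a, t ^ (-(3/2) : ℝ) * ∑' n, Real.exp (-(ω n) ^ 2 * t))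
      = ∫ t in Set.Ioi a, ∑' n, t ^ (-(3/2) : ℝ) * Real.exp (-(ω n) ^ 2 * t) := by
    congr 1
    funext t
    rw [tsum_mul_left]
  rw [hpt, hint_eq]
  exact hfinal
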